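/- Let M be a loopless matroid on [n], and suppose [n] is partitioned as T_1 ⊔ ... ⊔ T_ℓ ⊔ S with each T_i nonempty, such that Σ_{i=1}^ℓ (2·rank_M(T_i) − 1) + |S| = rank(D(M,M)). Then every element of S is a coloop of D(M,M), and each T_i is a union of connected components of D(M,M). -/

import Mathlib

open Finset

/-- A matroid on the ground set `Fin n`, presented by its rank function. -/
structure FinMatroid (n : ℕ) where
  rank : Finset (Fin n) → ℕ
  rank_empty : rank ∅ = 0
  rank_le_card : ∀ S : Finset (Fin n), rank S ≤ S.card
  rank_mono : ∀ ⦃S T : Finset (Fin n)⦄, S ⊆ T → rank S ≤ rank T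
  rank_submod : ∀ S T : Finset (Fin n),
    rank (S ∪ T) + rank (S ∩ T) ≤ rank S + rank T

namespace FinMatroid

variable {n : ℕ}

/-- A set is independent if its rank equals its cardinality. -/
def Indep (M : FinMatroid n) (I : Finset (Fin n)) : Prop := M.rank I = I.card

/-- The rank of the matroid (rank of the full ground set). -/
def rk (M : FinMatroid n) : ℕ := M.rank Finset.univ

/-- A matroid is loopless if every singleton has positive rank. -/
def Loopless (M : FinMatroid n) : Prop := ∀ i : Fin n, 0 < M.rank {i}

/-- Two matroids on `[n]` have no common loops. -/
def NoCommonLoops (M₁ M₂ : FinMatroid n) : Prop :=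
  ∀ i : Fin n, 0 < M₁.rank {i} ∨ 0 < M₂.rank {i}

/-- A valid family for the Dilworth minimum: pairwise disjoint nonempty
subsets of `S`. -/
def ValidFamily (S : Finset (Fin n)) (𝒯 : Finset (Finset (Fin n))) : Prop :=
  (∀ T ∈ 𝒯, T ⊆ S ∧ T.Nonempty) ∧
    ∀ T ∈ 𝒯, ∀ T' ∈ 𝒯, T ≠ T' → Disjoint T T'

/-- The value `Σ_i (rank_{M₁}(T_i) + rank_{M₂}(T_i) − 1) + |S \ ∪ T_i|`
associated to a family. -/
def famValue (M₁ M₂ : FinMatroid n) (S : Finset (Fin n))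
    (𝒯 : Finset (Finset (Fin n))) : ℕ :=
  (∑ T ∈ 𝒯, (M₁.rank T + M₂.rank T - 1)) + (S \ 𝒯.sup id).card

/-- The rank function of the diagonal Dilworth truncation `D(M₁,M₂)`. -/
noncomputable def rankD (M₁ M₂ : FinMatroid n) (S : Finset (Fin n)) : ℕ :=
  sInf {v : ℕ | ∃ 𝒯 : Finset (Finset (Fin n)),
    ValidFamily S 𝒯 ∧ v = famValue M₁ M₂ S 𝒯}

/-- Independence in the diagonal Dilworth truncation. -/
def IndepD (M₁ M₂ : FinMatroid n) (I : Finset (Fin n)) : Prop :=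
  rankD M₁ M₂ I = I.card

/-- Circuits of the diagonal Dilworth truncation: minimal dependent sets. -/
def CircuitD (M₁ M₂ : FinMatroid n) (C : Finset (Fin n)) : Prop :=
  ¬ IndepD M₁ M₂ C ∧ ∀ C' : Finset (Fin n), C' ⊂ C → IndepD M₁ M₂ C'

end FinMatroid


namespace FinMatroid

variable {n : ℕ}

lemma one_le_rank {M : FinMatroid n} (hM : M.Loopless) {S : Finset (Fin n)}
    (hS : S.Nonempty) : 1 ≤ M.rank S := by
  obtain ⟨x, hx⟩ := hS
  have h1 := hM x
  have h2 := M.rank_mono (show {x} ⊆ S by simpa using hx)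
  omega

lemma rankD_le {M₁ M₂ : FinMatroid n} {S 𝒯 : _} (h : ValidFamily S 𝒯) :
    rankD M₁ M₂ S ≤ famValue M₁ M₂ S 𝒯 := Nat.sInf_le ⟨𝒯, h, rfl⟩

lemma validFamily_empty (S : Finset (Fin n)) : ValidFamily S (∅ : Finset (Finset (Fin n))) := by
  constructor <;> intro T hT <;> simp at hT

lemma exists_optimal (M₁ M₂ : FinMatroid n) (S : Finset (Fin n)) :
    ∃ 𝒯, ValidFamily S 𝒯 ∧ rankD M₁ M₂ S = famValue M₁ M₂ S 𝒯 := by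
  have hne : {v : ℕ | ∃ 𝒯 : Finset (Finset (Fin n)),
      ValidFamily S 𝒯 ∧ v = famValue M₁ M₂ S 𝒯}.Nonempty :=
    ⟨famValue M₁ M₂ S ∅, ∅, validFamily_empty S, rfl⟩
  exact Nat.sInf_mem hne

lemma rankD_empty (M₁ M₂ : FinMatroid n) : rankD M₁ M₂ (∅ : Finset (Fin n)) = 0 := by
  have := rankD_le (M₁ := M₁) (M₂ := M₂) (validFamily_empty (∅ : Finset (Fin n)))
  simpa [famValue] using this

lemma rankD_union_le (M₁ M₂ : FinMatroid n) {A B : Finset (Fin n)} (hAB : Disjoint A B) :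
    rankD M₁ M₂ (A ∪ B) ≤ rankD M₁ M₂ A + rankD M₁ M₂ B := by
  classical
  obtain ⟨𝒜, hA, hAv⟩ := exists_optimal M₁ M₂ A
  obtain ⟨ℬ, hB, hBv⟩ := exists_optimal M₁ M₂ B
  have hdisj : Disjoint 𝒜 ℬ := by
    rw [Finset.disjoint_left]
    intro X hX hX'
    have h1 := hA.1 X hX
    have h2 := hB.1 X hX'
    have := hAB.mono h1.1 h2.1
    rw [disjoint_self] at this
    exact absurd this h1.2.ne_empty
  have hval : ValidFamily (A ∪ B) (𝒜 ∪ ℬ) := by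
    constructor
    · intro T hT
      rcases Finset.mem_union.1 hT with h | h
      · exact ⟨(hA.1 T h).1.trans Finset.subset_union_left, (hA.1 T h).2⟩
      · exact ⟨(hB.1 T h).1.trans Finset.subset_union_right, (hB.1 T h).2⟩
    · intro T hT T' hT' hne
      rcases Finset.mem_union.1 hT with h | h <;> rcases Finset.mem_union.1 hT' with h' | h'
      · exact hA.2 T h T' h' hne
      · exact hAB.mono (hA.1 T h).1 (hB.1 T' h').1
      · exact (hAB.mono (hA.1 T' h').1 (hB.1 T h).1).symm
      · exact hB.2 T h T' h' hne
  have hle := rankD_le (M₁ := M₁) (M₂ := M₂) hval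
  have hPA : 𝒜.sup id ⊆ A := Finset.sup_le fun T hT => (hA.1 T hT).1
  have hQB : ℬ.sup id ⊆ B := Finset.sup_le fun T hT => (hB.1 T hT).1
  have hsup : (𝒜 ∪ ℬ).sup id = 𝒜.sup id ∪ ℬ.sup id := Finset.sup_union
  have hset : (A ∪ B) \ ((𝒜 ∪ ℬ).sup id) = (A \ 𝒜.sup id) ∪ (B \ ℬ.sup id) := by
    rw [hsup]
    ext x
    have h1 : x ∈ 𝒜.sup id → x ∈ A := fun h => hPA h
    have h2 : x ∈ ℬ.sup id → x ∈ B := fun h => hQB h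
    have h3 : x ∈ A → x ∉ B := fun h => Finset.disjoint_left.1 hAB h
    simp only [Finset.mem_sdiff, Finset.mem_union]
    tauto
  have hcard : ((A ∪ B) \ ((𝒜 ∪ ℬ).sup id)).card
      = (A \ 𝒜.sup id).card + (B \ ℬ.sup id).card := by
    rw [hset]
    exact Finset.card_union_of_disjoint
      (hAB.mono Finset.sdiff_subset Finset.sdiff_subset)
  have hsum : ∑ T ∈ 𝒜 ∪ ℬ, (M₁.rank T + M₂.rank T - 1)
      = ∑ T ∈ 𝒜, (M₁.rank T + M₂.rank T - 1) + ∑ T ∈ ℬ, (M₁.rank T + M₂.rank T - 1) :=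
    Finset.sum_union hdisj
  unfold famValue at hle hAv hBv
  omega

lemma rank_uncross (M : FinMatroid n) (Q : Finset (Fin n)) (𝒞 : Finset (Finset (Fin n))) :
    M.rank (Q ∪ 𝒞.sup id) + ∑ R ∈ 𝒞, M.rank (R ∩ Q)
      ≤ M.rank Q + ∑ R ∈ 𝒞, M.rank R := by
  classical
  induction 𝒞 using Finset.induction_on with
  | empty => simp
  | @insert a s ha ih =>
    rw [Finset.sum_insert ha, Finset.sum_insert ha, Finset.sup_insert]
    have hsub := M.rank_submod (Q ∪ s.sup id) a
    have hmono : M.rank (a ∩ Q) ≤ M.rank ((Q ∪ s.sup id) ∩ a) := by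
      apply M.rank_mono
      intro x hx
      simp only [Finset.mem_inter, Finset.mem_union] at hx ⊢
      tauto
    have he : Q ∪ (id a ⊔ s.sup id) = (Q ∪ s.sup id) ∪ a := by
      ext x
      simp only [id, Finset.sup_eq_union, Finset.mem_union]
      tauto
    rw [he]
    omega

lemma sum_sub_one {α : Type*} [DecidableEq α] (s : Finset α) (f : α → ℕ)
    (hf : ∀ x ∈ s, 1 ≤ f x) :
    ∑ x ∈ s, (f x + f x - 1) + s.card = ∑ x ∈ s, f x + ∑ x ∈ s, f x := by
  classical
  induction s using Finset.induction_on with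
  | empty => simp
  | @insert a s ha ih =>
    rw [Finset.sum_insert ha, Finset.sum_insert ha, Finset.card_insert_of_notMem ha]
    have h1 := hf a (Finset.mem_insert_self a s)
    have h2 := ih fun x hx => hf x (Finset.mem_insert_of_mem hx)
    omega

end FinMatroid

namespace FinMatroid

lemma rankD_submod_single {n : ℕ} {M : FinMatroid n} (hM : M.Loopless)
    (X Q : Finset (Fin n)) (hQ : Q.Nonempty) :
    rankD M M (X ∪ Q) + rankD M M (X ∩ Q)
      ≤ rankD M M X + (M.rank Q + M.rank Q - 1) := by
  classical
  obtain ⟨𝒯, hv, hval⟩ := exists_optimal M M X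
  set 𝒞 : Finset (Finset (Fin n)) := 𝒯.filter (fun R => (R ∩ Q).Nonempty) with h𝒞
  set 𝒟 : Finset (Finset (Fin n)) := 𝒯.filter (fun R => ¬(R ∩ Q).Nonempty) with h𝒟
  set C : Finset (Fin n) := Q ∪ 𝒞.sup id with hC
  have h𝒞sub : ∀ R ∈ 𝒞, R ∈ 𝒯 ∧ (R ∩ Q).Nonempty := fun R hR => Finset.mem_filter.1 hR
  have h𝒟sub : ∀ R ∈ 𝒟, R ∈ 𝒯 ∧ (R ∩ Q) = ∅ := by
    intro R hR
    obtain ⟨h1, h2⟩ := Finset.mem_filter.1 hR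
    exact ⟨h1, Finset.not_nonempty_iff_eq_empty.1 h2⟩
  have hT𝒯 : ∀ R ∈ 𝒯, R ⊆ X ∧ R.Nonempty := hv.1
  have hsupC : 𝒞.sup id ⊆ X := Finset.sup_le fun R hR => (hT𝒯 R (h𝒞sub R hR).1).1
  have hsup𝒯 : ∀ x, x ∈ 𝒯.sup id ↔ x ∈ 𝒞.sup id ∨ x ∈ 𝒟.sup id := by
    intro x
    simp only [Finset.mem_sup, id_eq, h𝒞, h𝒟, Finset.mem_filter]
    constructor
    · rintro ⟨R, hR, hxR⟩
      by_cases hc : (R ∩ Q).Nonempty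
      · exact Or.inl ⟨R, ⟨hR, hc⟩, hxR⟩
      · exact Or.inr ⟨R, ⟨hR, hc⟩, hxR⟩
    · rintro (⟨R, ⟨hR, _⟩, hxR⟩ | ⟨R, ⟨hR, _⟩, hxR⟩) <;> exact ⟨R, hR, hxR⟩
  have hCnotin : C ∉ 𝒟 := by
    intro hmem
    obtain ⟨_, h2⟩ := h𝒟sub C hmem
    obtain ⟨q, hq⟩ := hQ
    have : q ∈ C ∩ Q := Finset.mem_inter.2 ⟨Finset.mem_union_left _ hq, hq⟩
    rw [h2] at this
    simp at this
  -- the family on X ∪ Q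
  have hval1 : ValidFamily (X ∪ Q) (insert C 𝒟) := by
    constructor
    · intro T hT
      rcases Finset.mem_insert.1 hT with rfl | hT
      · constructor
        · intro x hx
          rcases Finset.mem_union.1 hx with hx | hx
          · exact Finset.mem_union_right _ hx
          · exact Finset.mem_union_left _ (hsupC hx)
        · exact hQ.mono (Finset.subset_union_left)
      · obtain ⟨h1, h2⟩ := hT𝒯 T (h𝒟sub T hT).1
        exact ⟨h1.trans Finset.subset_union_left, h2⟩
    · intro T hT T' hT' hne
      have key : ∀ D ∈ 𝒟, Disjoint C D := by
        intro D hD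
        rw [hC, Finset.disjoint_union_left]
        constructor
        · rw [Finset.disjoint_left]
          intro x hx hxD
          have : x ∈ D ∩ Q := Finset.mem_inter.2 ⟨hxD, hx⟩
          rw [(h𝒟sub D hD).2] at this
          simp at this
        · rw [Finset.disjoint_sup_left]
          intro R hR
          have hRD : R ≠ D := by
            intro h
            subst h
            obtain ⟨_, hne'⟩ := h𝒞sub R hR
            rw [(h𝒟sub R hD).2] at hne'
            simp [Finset.not_nonempty_empty] at hne'
          exact hv.2 R (h𝒞sub R hR).1 D (h𝒟sub D hD).1 hRD
      rcases Finset.mem_insert.1 hT with rfl | hT <;> rcases Finset.mem_insert.1 hT' with rfl | hT'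
      · exact absurd rfl hne
      · exact key T' hT'
      · exact (key T hT).symm
      · exact hv.2 T (h𝒟sub T hT).1 T' (h𝒟sub T' hT').1 hne
  have hfree1 : (X ∪ Q) \ ((insert C 𝒟).sup id) = (X \ 𝒯.sup id) \ Q := by
    ext x
    have h𝒯x := hsup𝒯 x
    have hx𝒟 : x ∈ 𝒟.sup id → x ∈ X := by
      rw [Finset.mem_sup]
      rintro ⟨R, hR, hxR⟩
      exact (hT𝒯 R (h𝒟sub R hR).1).1 hxR
    simp only [Finset.sup_insert, Finset.mem_sdiff, Finset.mem_union, Finset.sup_eq_union,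
      id_eq, hC] at *
    tauto
  have hle1 := rankD_le (M₁ := M) (M₂ := M) hval1
  -- the family on X ∩ Q
  have hinj : ∀ R ∈ 𝒞, ∀ R' ∈ 𝒞, R ∩ Q = R' ∩ Q → R = R' := by
    intro R hR R' hR' hE
    by_contra hne
    have hd := hv.2 R (h𝒞sub R hR).1 R' (h𝒞sub R' hR').1 hne
    obtain ⟨x, hx⟩ := (h𝒞sub R hR).2
    have hx' : x ∈ R' ∩ Q := hE ▸ hx
    exact Finset.disjoint_left.1 hd (Finset.mem_inter.1 hx).1 (Finset.mem_inter.1 hx').1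
  have hval2 : ValidFamily (X ∩ Q) (𝒞.image (· ∩ Q)) := by
    constructor
    · intro T hT
      obtain ⟨R, hR, rfl⟩ := Finset.mem_image.1 hT
      constructor
      · intro x hx
        obtain ⟨h1, h2⟩ := Finset.mem_inter.1 hx
        exact Finset.mem_inter.2 ⟨(hT𝒯 R (h𝒞sub R hR).1).1 h1, h2⟩
      · exact (h𝒞sub R hR).2
    · intro T hT T' hT' hne
      obtain ⟨R, hR, rfl⟩ := Finset.mem_image.1 hT
      obtain ⟨R', hR', rfl⟩ := Finset.mem_image.1 hT'
      have hRR' : R ≠ R' := fun h => hne (by rw [h])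
      exact (hv.2 R (h𝒞sub R hR).1 R' (h𝒞sub R' hR').1 hRR').mono
        Finset.inter_subset_left Finset.inter_subset_left
  have hfree2 : (X ∩ Q) \ ((𝒞.image (· ∩ Q)).sup id) = (X \ 𝒯.sup id) ∩ Q := by
    ext x
    simp only [Finset.mem_sdiff, Finset.mem_inter, Finset.mem_sup, Finset.mem_image, id_eq]
    constructor
    · rintro ⟨⟨hxX, hxQ⟩, hnot⟩
      refine ⟨⟨hxX, ?_⟩, hxQ⟩
      intro hx𝒯
      obtain ⟨R, hR, hxR⟩ := hx𝒯
      have hR𝒞 : R ∈ 𝒞 := Finset.mem_filter.2 ⟨hR, ⟨x, Finset.mem_inter.2 ⟨hxR, hxQ⟩⟩⟩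
      exact hnot ⟨R ∩ Q, ⟨R, hR𝒞, rfl⟩, Finset.mem_inter.2 ⟨hxR, hxQ⟩⟩
    · rintro ⟨⟨hxX, hx𝒯⟩, hxQ⟩
      refine ⟨⟨hxX, hxQ⟩, ?_⟩
      rintro ⟨_, ⟨R, hR, rfl⟩, hxR⟩
      exact hx𝒯 ⟨R, (h𝒞sub R hR).1, (Finset.mem_inter.1 hxR).1⟩
  have hle2 := rankD_le (M₁ := M) (M₂ := M) hval2
  -- arithmetic
  have hsum1 : ∑ T ∈ insert C 𝒟, (M.rank T + M.rank T - 1)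
      = (M.rank C + M.rank C - 1) + ∑ T ∈ 𝒟, (M.rank T + M.rank T - 1) :=
    Finset.sum_insert hCnotin
  have hsumim : ∑ T ∈ 𝒞.image (· ∩ Q), (M.rank T + M.rank T - 1)
      = ∑ R ∈ 𝒞, (M.rank (R ∩ Q) + M.rank (R ∩ Q) - 1) := by
    rw [Finset.sum_image hinj]
  have hsplit : ∑ T ∈ 𝒯, (M.rank T + M.rank T - 1)
      = ∑ T ∈ 𝒞, (M.rank T + M.rank T - 1) + ∑ T ∈ 𝒟, (M.rank T + M.rank T - 1) :=
    (Finset.sum_filter_add_sum_filter_not 𝒯 _ _).symm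
  have hcardsplit : ((X \ 𝒯.sup id) \ Q).card + ((X \ 𝒯.sup id) ∩ Q).card
      = (X \ 𝒯.sup id).card := Finset.card_sdiff_add_card_inter _ _
  have huncross := rank_uncross M Q 𝒞
  have hg1 : ∑ R ∈ 𝒞, (M.rank (R ∩ Q) + M.rank (R ∩ Q) - 1) + 𝒞.card
      = ∑ R ∈ 𝒞, M.rank (R ∩ Q) + ∑ R ∈ 𝒞, M.rank (R ∩ Q) :=
    sum_sub_one 𝒞 _ (fun R hR => one_le_rank hM (h𝒞sub R hR).2)
  have hg2 : ∑ R ∈ 𝒞, (M.rank R + M.rank R - 1) + 𝒞.card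
      = ∑ R ∈ 𝒞, M.rank R + ∑ R ∈ 𝒞, M.rank R :=
    sum_sub_one 𝒞 _ (fun R hR => one_le_rank hM (hT𝒯 R (h𝒞sub R hR).1).2)
  have hrC : 1 ≤ M.rank C := one_le_rank hM (hQ.mono Finset.subset_union_left)
  have hrQ : 1 ≤ M.rank Q := one_le_rank hM hQ
  have hCQ : M.rank C = M.rank (Q ∪ 𝒞.sup id) := rfl
  unfold famValue at hle1 hle2 hval
  rw [hfree1] at hle1
  rw [hfree2, hsumim] at hle2
  rw [hsum1] at hle1
  omega

end FinMatroid

namespace FinMatroid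

lemma rankD_sup_submod {n : ℕ} {M : FinMatroid n} (hM : M.Loopless)
    (𝒬 : Finset (Finset (Fin n))) :
    (∀ Q ∈ 𝒬, Q.Nonempty) → (∀ Q ∈ 𝒬, ∀ Q' ∈ 𝒬, Q ≠ Q' → Disjoint Q Q') →
    ∀ A : Finset (Fin n),
    rankD M M (A ∪ 𝒬.sup id) + rankD M M (A ∩ 𝒬.sup id)
      ≤ rankD M M A + ∑ Q ∈ 𝒬, (M.rank Q + M.rank Q - 1) := by
  classical
  induction 𝒬 using Finset.induction_on with
  | empty =>
    intro _ _ A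
    simp [rankD_empty]
  | @insert Q s hQs ih =>
    intro h1 h2 A
    have hQne : Q.Nonempty := h1 Q (Finset.mem_insert_self Q s)
    have IH := ih (fun R hR => h1 R (Finset.mem_insert_of_mem hR))
      (fun R hR R' hR' hne => h2 R (Finset.mem_insert_of_mem hR) R'
        (Finset.mem_insert_of_mem hR') hne) A
    have hQB : Disjoint Q (s.sup id) := by
      rw [Finset.disjoint_sup_right]
      intro R hR
      have hne : Q ≠ R := fun h => hQs (h ▸ hR)
      exact h2 Q (Finset.mem_insert_self Q s) R (Finset.mem_insert_of_mem hR) hne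
    have hL4 := rankD_submod_single hM (A ∪ s.sup id) Q hQne
    have e1 : (A ∪ s.sup id) ∪ Q = A ∪ (insert Q s).sup id := by
      rw [Finset.sup_insert]
      ext x
      simp only [Finset.mem_union, Finset.sup_eq_union, id_eq]
      tauto
    have e2 : (A ∪ s.sup id) ∩ Q = A ∩ Q := by
      ext x
      have hx : x ∈ s.sup id → x ∉ Q := fun h => Finset.disjoint_right.1 hQB h
      simp only [Finset.mem_inter, Finset.mem_union]
      tauto
    rw [e1, e2] at hL4
    have e3 : A ∩ (insert Q s).sup id = (A ∩ Q) ∪ (A ∩ s.sup id) := by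
      rw [Finset.sup_insert]
      ext x
      simp only [Finset.mem_inter, Finset.mem_union, Finset.sup_eq_union, id_eq]
      tauto
    have hL3 : rankD M M (A ∩ (insert Q s).sup id)
        ≤ rankD M M (A ∩ Q) + rankD M M (A ∩ s.sup id) := by
      rw [e3]
      exact rankD_union_le M M (hQB.mono Finset.inter_subset_right Finset.inter_subset_right)
    rw [Finset.sum_insert hQs]
    omega

lemma rankD_submod {n : ℕ} {M : FinMatroid n} (hM : M.Loopless) (A B : Finset (Fin n)) :
    rankD M M (A ∪ B) + rankD M M (A ∩ B) ≤ rankD M M A + rankD M M B := by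
  classical
  obtain ⟨𝒯, hv, hval⟩ := exists_optimal M M B
  set F : Finset (Fin n) := B \ 𝒯.sup id with hF
  set 𝒬 : Finset (Finset (Fin n)) := 𝒯 ∪ F.image (fun x => ({x} : Finset (Fin n))) with h𝒬
  have hsup𝒯B : 𝒯.sup id ⊆ B := Finset.sup_le fun T hT => (hv.1 T hT).1
  have hxF : ∀ x ∈ F, x ∉ 𝒯.sup id := fun x hx => (Finset.mem_sdiff.1 hx).2
  have hdisjTF : Disjoint 𝒯 (F.image (fun x => ({x} : Finset (Fin n)))) := by
    rw [Finset.disjoint_left]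
    intro T hT hT'
    obtain ⟨x, hx, rfl⟩ := Finset.mem_image.1 hT'
    exact hxF x hx (Finset.mem_sup.2 ⟨{x}, hT, Finset.mem_singleton_self x⟩)
  have h𝒬1 : ∀ Q ∈ 𝒬, Q.Nonempty := by
    intro Q hQ
    rcases Finset.mem_union.1 hQ with h | h
    · exact (hv.1 Q h).2
    · obtain ⟨x, _, rfl⟩ := Finset.mem_image.1 h
      exact Finset.singleton_nonempty x
  have h𝒬2 : ∀ Q ∈ 𝒬, ∀ Q' ∈ 𝒬, Q ≠ Q' → Disjoint Q Q' := by
    have key : ∀ T ∈ 𝒯, ∀ x ∈ F, Disjoint T ({x} : Finset (Fin n)) := by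
      intro T hT x hx
      rw [Finset.disjoint_singleton_right]
      exact fun hxT => hxF x hx (Finset.mem_sup.2 ⟨T, hT, hxT⟩)
    intro Q hQ Q' hQ' hne
    rcases Finset.mem_union.1 hQ with h | h <;> rcases Finset.mem_union.1 hQ' with h' | h'
    · exact hv.2 Q h Q' h' hne
    · obtain ⟨x, hx, rfl⟩ := Finset.mem_image.1 h'
      exact key Q h x hx
    · obtain ⟨x, hx, rfl⟩ := Finset.mem_image.1 h
      exact (key Q' h' x hx).symm
    · obtain ⟨x, hx, rfl⟩ := Finset.mem_image.1 h
      obtain ⟨y, hy, rfl⟩ := Finset.mem_image.1 h'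
      rw [Finset.disjoint_singleton_left, Finset.mem_singleton]
      exact fun hxy => hne (by rw [hxy])
  have hsup : 𝒬.sup id = B := by
    rw [h𝒬, Finset.sup_union, Finset.sup_image]
    have : Function.comp id (fun x : Fin n => ({x} : Finset (Fin n))) = singleton := rfl
    rw [this, Finset.sup_singleton_eq_self]
    rw [Finset.sup_eq_union]
    exact Finset.union_sdiff_of_subset hsup𝒯B
  have hsum : ∑ Q ∈ 𝒬, (M.rank Q + M.rank Q - 1)
      = ∑ T ∈ 𝒯, (M.rank T + M.rank T - 1) + F.card := by
    rw [h𝒬, Finset.sum_union hdisjTF]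
    congr 1
    rw [Finset.sum_image (by intro x _ y _ h; simpa using h)]
    have hone : ∀ x ∈ F, M.rank {x} + M.rank {x} - 1 = 1 := by
      intro x _
      have h1 := hM x
      have h2 := M.rank_le_card {x}
      simp only [Finset.card_singleton] at h2
      omega
    rw [Finset.sum_congr rfl hone]
    simp
  have := rankD_sup_submod hM 𝒬 h𝒬1 h𝒬2 A
  rw [hsup, hsum] at this
  unfold famValue at hval
  rw [← hF] at hval
  omega

end FinMatroid


open FinMatroid in
/-- If `[n] = T₁ ⊔ ... ⊔ T_ℓ ⊔ S` witnesses the rank of `D(M,M)`, i.e.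
`Σ_i (2·rank_M(T_i) − 1) + |S| = rank(D(M,M))`, then every element of `S` is a
coloop of `D(M,M)` and every `T_i` is a union of connected components of
`D(M,M)` (that is, a separator). -/
theorem rankD_witness_structure (n : ℕ) (M : FinMatroid n) (hM : M.Loopless)
    (𝒯 : Finset (Finset (Fin n)))
    (hval : ValidFamily Finset.univ 𝒯)
    (heq : famValue M M Finset.univ 𝒯 = rankD M M Finset.univ) :
    (∀ i ∈ Finset.univ \ 𝒯.sup id,
        rankD M M (Finset.univ.erase i) < rankD M M Finset.univ) ∧
    (∀ T ∈ 𝒯, ∀ A : Finset (Fin n),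
        rankD M M A = rankD M M (A ∩ T) + rankD M M (A \ T)) := by
  classical
  constructor
  · -- coloops
    intro i hi
    have hinot : i ∉ 𝒯.sup id := (Finset.mem_sdiff.1 hi).2
    have hval' : ValidFamily (Finset.univ.erase i) 𝒯 := by
      constructor
      · intro T hT
        refine ⟨?_, (hval.1 T hT).2⟩
        intro x hx
        refine Finset.mem_erase.2 ⟨?_, Finset.mem_univ x⟩
        intro h
        exact hinot (Finset.mem_sup.2 ⟨T, hT, h ▸ hx⟩)
      · exact hval.2
    have hle := rankD_le (M₁ := M) (M₂ := M) hval'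
    have hset : Finset.univ.erase i \ 𝒯.sup id = (Finset.univ \ 𝒯.sup id).erase i := by
      ext x
      simp only [Finset.mem_sdiff, Finset.mem_erase, Finset.mem_univ, true_and, and_true]
      try tauto
    have hcard : (Finset.univ.erase i \ 𝒯.sup id).card
        = (Finset.univ \ 𝒯.sup id).card - 1 := by
      rw [hset, Finset.card_erase_of_mem hi]
    have hpos : 1 ≤ (Finset.univ \ 𝒯.sup id).card := Finset.card_pos.2 ⟨i, hi⟩
    unfold famValue at hle heq
    omega
  · -- separators
    intro T hT A
    obtain ⟨hTsub, hTne⟩ := hval.1 T hT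
    -- subadditivity
    have hα : rankD M M A ≤ rankD M M (A ∩ T) + rankD M M (A \ T) := by
      have hd2 : Disjoint (A ∩ T) (A \ T) := by
        rw [Finset.disjoint_left]
        intro x hx hx'
        exact (Finset.mem_sdiff.1 hx').2 (Finset.mem_inter.1 hx).2
      have := rankD_union_le M M hd2
      have hu : (A ∩ T) ∪ (A \ T) = A := by
        ext x
        simp only [Finset.mem_union, Finset.mem_inter, Finset.mem_sdiff]
        tauto
      rwa [hu] at this
    -- tightness of T
    have hδ : rankD M M T + rankD M M (Finset.univ \ T) ≤ rankD M M Finset.univ := by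
      have hvT : ValidFamily T ({T} : Finset (Finset (Fin n))) := by
        constructor
        · intro T' hT'
          rw [Finset.mem_singleton] at hT'
          subst hT'
          exact ⟨Finset.Subset.refl _, hTne⟩
        · intro T' hT' T'' hT'' hne
          rw [Finset.mem_singleton] at hT' hT''
          exact absurd (hT'.trans hT''.symm) hne
      have hleT := rankD_le (M₁ := M) (M₂ := M) hvT
      have hfvT : famValue M M T ({T} : Finset (Finset (Fin n)))
          = M.rank T + M.rank T - 1 := by
        unfold famValue
        simp
      have hvE : ValidFamily (Finset.univ \ T) (𝒯.erase T) := by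
        constructor
        · intro T' hT'
          obtain ⟨hne, hmem⟩ := Finset.mem_erase.1 hT'
          refine ⟨?_, (hval.1 T' hmem).2⟩
          intro x hx
          refine Finset.mem_sdiff.2 ⟨Finset.mem_univ x, ?_⟩
          intro hxT
          exact Finset.disjoint_left.1 (hval.2 T' hmem T hT hne) hx hxT
        · intro T' hT' T'' hT'' hne
          exact hval.2 T' (Finset.mem_of_mem_erase hT') T'' (Finset.mem_of_mem_erase hT'') hne
      have hleE := rankD_le (M₁ := M) (M₂ := M) hvE
      have hsetE : (Finset.univ \ T) \ ((𝒯.erase T).sup id) = Finset.univ \ 𝒯.sup id := by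
        ext x
        simp only [Finset.mem_sdiff, Finset.mem_univ, true_and, Finset.mem_sup,
          Finset.mem_erase, id_eq]
        constructor
        · rintro ⟨hxT, hnot⟩ ⟨R, hR, hxR⟩
          by_cases hRT : R = T
          · exact hxT (hRT ▸ hxR)
          · exact hnot ⟨R, ⟨hRT, hR⟩, hxR⟩
        · intro hnot
          constructor
          · exact fun hxT => hnot ⟨T, hT, hxT⟩
          · rintro ⟨R, ⟨_, hR⟩, hxR⟩
            exact hnot ⟨R, hR, hxR⟩
      have hsumE : ∑ T' ∈ 𝒯.erase T, (M.rank T' + M.rank T' - 1)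
          + (M.rank T + M.rank T - 1) = ∑ T' ∈ 𝒯, (M.rank T' + M.rank T' - 1) :=
        Finset.sum_erase_add 𝒯 _ hT
      unfold famValue at hleE heq
      rw [hsetE] at hleE
      omega
    -- submodularity instances
    have hβ := rankD_submod hM A T
    have hγ := rankD_submod hM (A ∪ T) (Finset.univ \ T)
    have e1 : (A ∪ T) ∪ (Finset.univ \ T) = Finset.univ := by
      ext x
      simp only [Finset.mem_union, Finset.mem_sdiff, Finset.mem_univ, true_and, iff_true]
      tauto
    have e2 : (A ∪ T) ∩ (Finset.univ \ T) = A \ T := by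
      ext x
      simp only [Finset.mem_inter, Finset.mem_union, Finset.mem_sdiff, Finset.mem_univ, true_and]
      tauto
    rw [e1, e2] at hγ
    omega
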